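/- Fix n ∈ ℕ, n ≥ 1, and let H ∈ ℝ^{n×n} be the matrix H(i,j) = 1{i ≥ j}/(n − j + 1). Define the makespan objective Minimax(x) = max_{i∈[n]} x(i). Then sup { Minimax(Hℓ)/Minimax(ℓ) : ℓ ∈ ℝ^n, 0 ≤ ℓ(1) ≤ ℓ(2) ≤ ⋯ ≤ ℓ(n), ℓ(n) > 0 } = H_n, where H_n = Σ_{i=1}^n 1/i is the n-th harmonic number; equivalently, sup over such ℓ of (Σ_{i∈[n]} ℓ(i)/(n − i + 1))/ℓ(n) = H_n. Consequently, the competitive ratio of water-filling for makespan minimization with n offline nodes equals H_n. -/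

import Mathlib

open Finset MeasureTheory

/-- A request sequence with `n` offline nodes and `m` online nodes: each online
node `t` has a nonempty neighborhood `N t ⊆ [n]` and a positive quantity `q t`. -/
structure ReqSeq (n m : ℕ) where
  N : Fin m → Finset (Fin n)
  q : Fin m → ℝ
  N_nonempty : ∀ t, (N t).Nonempty
  q_pos : ∀ t, 0 < q t

/-- `Δ(N, q)`: feasible allocations for a single online node. -/
def allocSet (n : ℕ) (N : Finset (Fin n)) (qt : ℝ) : Set (Fin n → ℝ) :=
  {x | (∀ i, 0 ≤ x i) ∧ (∀ i, i ∉ N → x i = 0) ∧ ∑ i, x i = qt}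

/-- A feasible allocation trajectory on a request sequence. -/
def Feasible {n m : ℕ} (E : ReqSeq n m) (x : Fin m → Fin n → ℝ) : Prop :=
  ∀ t, x t ∈ allocSet n (E.N t) (E.q t)

/-- `Δ(E)`: the Minkowski sum of the per-node allocation sets (feasible load vectors). -/
def loads {n m : ℕ} (E : ReqSeq n m) : Set (Fin n → ℝ) :=
  {ℓ | ∃ x, Feasible E x ∧ ℓ = ∑ t, x t}

/-- Sum of the `k` largest entries of `x`. -/
noncomputable def topSum {n : ℕ} (x : Fin n → ℝ) (k : ℕ) : ℝ :=
  sSup ((fun s : Finset (Fin n) => ∑ i ∈ s, x i) '' {s | s.card = k})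

/-- `Majorizes x y` means `x ⪰ y`: equal total sums and every `k`-largest-entries
sum of `x` dominates that of `y`. -/
def Majorizes {n : ℕ} (x y : Fin n → ℝ) : Prop :=
  (∑ i, x i = ∑ i, y i) ∧ ∀ k ≤ n, topSum y k ≤ topSum x k

/-- `f` is Schur-concave on the nonnegative orthant: `x ⪯ y → f x ≥ f y`. -/
def SchurConcave {n : ℕ} (f : (Fin n → ℝ) → ℝ) : Prop :=
  ∀ x y : Fin n → ℝ, (∀ i, 0 ≤ x i) → (∀ i, 0 ≤ y i) → Majorizes y x → f y ≤ f x

/-- `g` is Schur-convex on the nonnegative orthant: `x ⪯ y → g x ≤ g y`. -/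
def SchurConvex {n : ℕ} (g : (Fin n → ℝ) → ℝ) : Prop :=
  ∀ x y : Fin n → ℝ, (∀ i, 0 ≤ x i) → (∀ i, 0 ≤ y i) → Majorizes y x → g x ≤ g y

/-- Cumulative load strictly before online node `t`. -/
def prevLoad {n m : ℕ} (x : Fin m → Fin n → ℝ) (t : Fin m) : Fin n → ℝ :=
  fun i => ∑ s ∈ Finset.univ.filter (fun s => s < t), x s i

/-- Minimum of `v` over the neighborhood of online node `t`. -/
noncomputable def minOnNbhd {n m : ℕ} (E : ReqSeq n m) (t : Fin m) (v : Fin n → ℝ) : ℝ :=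
  (E.N t).inf' (E.N_nonempty t) v

/-- `x` is the water-filling allocation trajectory on `E`: at each arrival `t`,
`x t` maximizes the minimum post-allocation load over `N t`. -/
def IsWFAlloc {n m : ℕ} (E : ReqSeq n m) (x : Fin m → Fin n → ℝ) : Prop :=
  Feasible E x ∧
  ∀ t, ∀ y ∈ allocSet n (E.N t) (E.q t),
    minOnNbhd E t (fun i => y i + prevLoad x t i) ≤ minOnNbhd E t (fun i => x t i + prevLoad x t i)

-- The load vector produced by water-filling (via choice; the trajectory exists and is unique).
open Classical in
noncomputable def wfLoad {n m : ℕ} (E : ReqSeq n m) : Fin n → ℝ :=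
  if h : ∃ x, IsWFAlloc E x then ∑ t, h.choose t else 0

/-- `ℓ` is the majorization-minimal element of `Δ(E)`. -/
def IsOpt {n m : ℕ} (E : ReqSeq n m) (ℓ : Fin n → ℝ) : Prop :=
  ℓ ∈ loads E ∧ ∀ ℓ' ∈ loads E, Majorizes ℓ' ℓ

-- `OPT(E)`, the majorization-minimal feasible load vector (via choice).
open Classical in
noncomputable def optLoad {n m : ℕ} (E : ReqSeq n m) : Fin n → ℝ :=
  if h : ∃ ℓ, IsOpt E ℓ then h.choose else 0

/-- A request sequence is nested if `N 1 ⊇ N 2 ⊇ ⋯ ⊇ N m`. -/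
def IsNested {n m : ℕ} (E : ReqSeq n m) : Prop :=
  ∀ s t : Fin m, s ≤ t → E.N t ⊆ E.N s

/-- `E_{n,m,q}`: request sequences with total quantity `q`. -/
def seqs (n m : ℕ) (q : ℝ) : Set (ReqSeq n m) := {E | ∑ t, E.q t = q}

/-- The harmonic-series matrix applied to a vector: `(Hℓ)(i) = Σ_{j ≤ i} ℓ(j)/(n − j + 1)`
(in 1-indexed notation). -/
noncomputable def Hvec (n : ℕ) (ℓ : Fin n → ℝ) : Fin n → ℝ :=
  fun i => ∑ j ∈ Finset.univ.filter (fun j => j ≤ i), ℓ j / ((n - (j : ℕ) : ℕ) : ℝ)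

/-- The water-filling height of online node `t`: the common post-allocation load of
the offline nodes in the support of `x t`. -/
noncomputable def height {n m : ℕ} (x : Fin m → Fin n → ℝ) (t : Fin m) : ℝ :=
  sSup {c | ∃ i, 0 < x t i ∧ c = x t i + prevLoad x t i}


/-- The makespan objective `Minimax(x) = max_i x(i)`. -/
noncomputable def maxEntry {n : ℕ} (x : Fin n → ℝ) : ℝ := sSup (Set.range x)

/-- The `n`-th harmonicNum number `H_n = Σ_{i=1}^n 1/i`. -/
noncomputable def harmonicNum (n : ℕ) : ℝ := ∑ i ∈ Finset.range n, (1 : ℝ) / (i + 1)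


lemma le_maxEntry {n : ℕ} (x : Fin n → ℝ) (i : Fin n) : x i ≤ maxEntry x :=
  le_csSup (Set.finite_range x).bddAbove ⟨i, rfl⟩

lemma maxEntry_mem {n : ℕ} [NeZero n] (x : Fin n → ℝ) : ∃ i, maxEntry x = x i := by
  have h : sSup (Set.range x) ∈ Set.range x :=
    (Set.range_nonempty x).csSup_mem (Set.finite_range x)
  obtain ⟨i, hi⟩ := h
  exact ⟨i, hi.symm⟩

lemma maxEntry_le {n : ℕ} [NeZero n] (x : Fin n → ℝ) (c : ℝ) (h : ∀ i, x i ≤ c) :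
    maxEntry x ≤ c := by
  obtain ⟨i, hi⟩ := maxEntry_mem x; rw [hi]; exact h i

lemma sub_one_lt_self_aux (n : ℕ) (hn : 1 ≤ n) : n - 1 < n := by omega

lemma maxEntry_monotone {n : ℕ} (hn : 1 ≤ n) (x : Fin n → ℝ) (hx : Monotone x) :
    maxEntry x = x ⟨n - 1, sub_one_lt_self_aux n hn⟩ := by
  have : NeZero n := ⟨by omega⟩
  refine le_antisymm (maxEntry_le x _ fun i => hx ?_) (le_maxEntry x _)
  exact Fin.le_def.mpr (by simp; omega)

lemma harmonic_sum_eq (n : ℕ) : ∑ j : Fin n, (1:ℝ) / ((n - (j : ℕ) : ℕ) : ℝ) = harmonicNum n := by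
  rw [harmonicNum, Fin.sum_univ_eq_sum_range (fun j => (1:ℝ)/((n - j : ℕ) : ℝ)),
    ← Finset.sum_range_reflect (fun j => (1:ℝ)/(j+1))]
  refine Finset.sum_congr rfl fun j hj => ?_
  rw [Finset.mem_range] at hj
  rw [show n - j = (n-1-j)+1 by omega]
  push_cast; ring

lemma Hvec_last (n : ℕ) (hn : 1 ≤ n) (ℓ : Fin n → ℝ) :
    Hvec n ℓ ⟨n - 1, sub_one_lt_self_aux n hn⟩ = ∑ j : Fin n, ℓ j / ((n - (j : ℕ) : ℕ) : ℝ) := by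
  unfold Hvec
  refine Finset.sum_congr ?_ fun _ _ => rfl
  rw [Finset.filter_true_of_mem]
  intro j _
  exact Fin.le_def.mpr (by simp; omega)

lemma Hvec_monotone (n : ℕ) (ℓ : Fin n → ℝ) (hℓ : ∀ i, 0 ≤ ℓ i) : Monotone (Hvec n ℓ) := by
  intro a b hab
  refine Finset.sum_le_sum_of_subset_of_nonneg ?_ ?_
  · intro j hj
    simp only [Finset.mem_filter, Finset.mem_univ, true_and] at *
    exact hj.trans hab
  · intro j _ _
    have : (0:ℝ) < ((n - (j:ℕ) : ℕ) : ℝ) := by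
      have : (j:ℕ) < n := j.isLt
      exact_mod_cast Nat.sub_pos_of_lt this
    exact div_nonneg (hℓ j) this.le

lemma ratio_le_harmonic (n : ℕ) (hn : 1 ≤ n) (ℓ : Fin n → ℝ) (h0 : ∀ i, 0 ≤ ℓ i)
    (hm : Monotone ℓ) (hpos : 0 < ℓ ⟨n - 1, sub_one_lt_self_aux n hn⟩) :
    (∑ i : Fin n, ℓ i / ((n - (i : ℕ) : ℕ) : ℝ)) / ℓ ⟨n - 1, sub_one_lt_self_aux n hn⟩ ≤ harmonicNum n := by
  rw [div_le_iff₀ hpos]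
  calc ∑ i : Fin n, ℓ i / ((n - (i : ℕ) : ℕ) : ℝ)
      ≤ ∑ i : Fin n, ℓ ⟨n - 1, by omega⟩ * (1 / ((n - (i : ℕ) : ℕ) : ℝ)) := by
        refine Finset.sum_le_sum fun i _ => ?_
        have hd : (0:ℝ) < ((n - (i:ℕ) : ℕ) : ℝ) := by
          have : (i:ℕ) < n := i.isLt
          exact_mod_cast Nat.sub_pos_of_lt this
        rw [mul_one_div, div_le_div_iff₀ hd hd]
        have : ℓ i ≤ ℓ ⟨n - 1, by omega⟩ := hm (Fin.le_def.mpr (by simp; omega))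
        nlinarith
    _ = harmonicNum n * ℓ ⟨n - 1, by omega⟩ := by
        rw [← Finset.mul_sum, harmonic_sum_eq]; ring

lemma part2_eq (n : ℕ) (hn : 1 ≤ n) :
    sSup {r : ℝ | ∃ ℓ : Fin n → ℝ, (∀ i, 0 ≤ ℓ i) ∧ Monotone ℓ ∧
        0 < ℓ ⟨n - 1, sub_one_lt_self_aux n hn⟩ ∧
        r = (∑ i : Fin n, ℓ i / ((n - (i : ℕ) : ℕ) : ℝ)) / ℓ ⟨n - 1, sub_one_lt_self_aux n hn⟩}
      = harmonicNum n := by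
  refine IsGreatest.csSup_eq ⟨⟨fun _ => 1, fun _ => zero_le_one, monotone_const,
    one_pos, by rw [harmonic_sum_eq n]; simp⟩, ?_⟩
  rintro r ⟨ℓ, h0, hm, hpos, rfl⟩
  exact ratio_le_harmonic n hn ℓ h0 hm hpos

lemma part1_eq (n : ℕ) (hn : 1 ≤ n) :
    sSup {r : ℝ | ∃ ℓ : Fin n → ℝ, (∀ i, 0 ≤ ℓ i) ∧ Monotone ℓ ∧
        0 < ℓ ⟨n - 1, sub_one_lt_self_aux n hn⟩ ∧
        r = maxEntry (Hvec n ℓ) / maxEntry ℓ} = harmonicNum n := by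
  have key : ∀ ℓ : Fin n → ℝ, (∀ i, 0 ≤ ℓ i) → Monotone ℓ →
      maxEntry (Hvec n ℓ) / maxEntry ℓ
        = (∑ i : Fin n, ℓ i / ((n - (i : ℕ) : ℕ) : ℝ)) / ℓ ⟨n - 1, by omega⟩ := by
    intro ℓ h0 hm
    rw [maxEntry_monotone hn _ (Hvec_monotone n ℓ h0), maxEntry_monotone hn _ hm,
      Hvec_last n hn ℓ]
  refine IsGreatest.csSup_eq ⟨⟨fun _ => 1, fun _ => zero_le_one, monotone_const,
    one_pos, by rw [key _ (fun _ => zero_le_one) monotone_const, harmonic_sum_eq n]; simp⟩, ?_⟩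
  rintro r ⟨ℓ, h0, hm, hpos, rfl⟩
  rw [key ℓ h0 hm]
  exact ratio_le_harmonic n hn ℓ h0 hm hpos


lemma sum_eq_sum_N {n : ℕ} {N : Finset (Fin n)} {qt : ℝ} {x : Fin n → ℝ}
    (hx : x ∈ allocSet n N qt) : ∑ j ∈ N, x j = qt := by
  obtain ⟨h1, h2, h3⟩ := hx
  rw [← h3]
  exact Finset.sum_subset (Finset.subset_univ N) (fun j _ hj => h2 j hj)

lemma mem_N_of_pos {n : ℕ} {N : Finset (Fin n)} {qt : ℝ} {x : Fin n → ℝ}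
    (hx : x ∈ allocSet n N qt) {i : Fin n} (hi : 0 < x i) : i ∈ N := by
  by_contra h
  exact absurd (hx.2.1 i h) (ne_of_gt hi)

lemma wf_receiver {n m : ℕ} {E : ReqSeq n m} {x : Fin m → Fin n → ℝ}
    (hx : IsWFAlloc E x) (t : Fin m) (i : Fin n) (hi : 0 < x t i) :
    x t i + prevLoad x t i ≤ minOnNbhd E t (fun j => x t j + prevLoad x t j) := by
  classical
  obtain ⟨hfeas, hopt⟩ := hx
  have hxt := hfeas t
  obtain ⟨hxpos, hxsupp, hxsum⟩ := hxt
  have hiN : i ∈ E.N t := by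
    by_contra hmem
    exact absurd (hxsupp i hmem) (ne_of_gt hi)
  set p : Fin n → ℝ := prevLoad x t with hp
  by_contra hcon
  push_neg at hcon
  set h : ℝ := minOnNbhd E t (fun j => x t j + p j) with hh
  have hhle : ∀ j ∈ E.N t, h ≤ x t j + p j := fun j hj =>
    Finset.inf'_le (fun j => x t j + p j) hj
  have hfih : h < x t i + p i := hcon
  rcases Nat.lt_or_ge (E.N t).card 2 with hk1 | hk2
  · -- singleton neighborhood: h = x t i + p i, contradiction
    have hcard : (E.N t).card = 1 :=
      le_antisymm (by omega) (Finset.card_pos.mpr ⟨i, hiN⟩)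
    obtain ⟨a, ha⟩ := Finset.card_eq_one.mp hcard
    have hia : i = a := by rwa [ha, Finset.mem_singleton] at hiN
    have : h = x t i + p i := by
      rw [hh, minOnNbhd]
      simp [ha, ← hia]
    linarith
  · have hki : 1 ≤ (E.N t).card - 1 := by omega
    have hkpos : (0:ℝ) < (((E.N t).card - 1 : ℕ) : ℝ) := by exact_mod_cast hki
    set δ : ℝ := min (x t i) (x t i + p i - h) / 2 with hδ
    have hδpos : 0 < δ := by
      have h1 : 0 < x t i + p i - h := by linarith
      have := lt_min hi h1
      positivity
    have hδle : δ ≤ x t i / 2 := by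
      have := min_le_left (x t i) (x t i + p i - h); rw [hδ]; linarith
    have hδle2 : δ ≤ (x t i + p i - h) / 2 := by
      have := min_le_right (x t i) (x t i + p i - h); rw [hδ]; linarith
    set ε : ℝ := δ / (((E.N t).card - 1 : ℕ) : ℝ) with hε
    have hεpos : 0 < ε := div_pos hδpos hkpos
    set y : Fin n → ℝ :=
      fun j => if j = i then x t i - δ else if j ∈ E.N t then x t j + ε else 0 with hy
    have hyi : y i = x t i - δ := by simp [hy]
    have hyj : ∀ j ∈ E.N t, j ≠ i → y j = x t j + ε := by
      intro j hj hji; simp [hy, hji, hj]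
    have hyout : ∀ j, j ∉ E.N t → y j = 0 := by
      intro j hj
      have hji : j ≠ i := fun e => hj (e ▸ hiN)
      simp [hy, hji, hj]
    have hyalloc : y ∈ allocSet n (E.N t) (E.q t) := by
      refine ⟨fun j => ?_, hyout, ?_⟩
      · by_cases hji : j = i
        · rw [hji, hyi]; linarith
        · by_cases hjN : j ∈ E.N t
          · rw [hyj j hjN hji]
            have := hxpos j; linarith
          · rw [hyout j hjN]
      · rw [← Finset.sum_subset (Finset.subset_univ (E.N t))
          (fun j _ hj => hyout j hj)]
        have hsplit : ∑ j ∈ E.N t, y j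
            = y i + ∑ j ∈ (E.N t).erase i, y j := (Finset.add_sum_erase _ y hiN).symm
        have herase : ∑ j ∈ (E.N t).erase i, y j
            = ∑ j ∈ (E.N t).erase i, (x t j + ε) := by
          refine Finset.sum_congr rfl fun j hj => ?_
          obtain ⟨hji, hjN⟩ := Finset.mem_erase.mp hj
          exact hyj j hjN hji
        have hxsplit : ∑ j ∈ E.N t, x t j
            = x t i + ∑ j ∈ (E.N t).erase i, x t j := (Finset.add_sum_erase _ (x t) hiN).symm
        have hq : ∑ j ∈ E.N t, x t j = E.q t := sum_eq_sum_N ⟨hxpos, hxsupp, hxsum⟩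
        rw [hsplit, herase, hyi, Finset.sum_add_distrib, Finset.sum_const,
          Finset.card_erase_of_mem hiN, nsmul_eq_mul, hε]
        rw [hq] at hxsplit
        have hcancel : (((E.N t).card - 1 : ℕ) : ℝ) * (δ / (((E.N t).card - 1 : ℕ) : ℝ)) = δ :=
          mul_div_cancel₀ δ (ne_of_gt hkpos)
        linarith [hxsplit, hcancel]
    have hlt : h < minOnNbhd E t (fun j => y j + p j) := by
      rw [minOnNbhd, Finset.lt_inf'_iff]
      intro j hj
      by_cases hji : j = i
      · subst hji; rw [hyi]; linarith
      · rw [hyj j hj hji]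
        have := hhle j hj; linarith
    have hle := hopt t y hyalloc
    rw [← hp, ← hh] at hle
    linarith

lemma prev_add_le_load {n m : ℕ} {x : Fin m → Fin n → ℝ}
    (hpos : ∀ t i, 0 ≤ x t i) (t : Fin m) (i : Fin n) :
    prevLoad x t i + x t i ≤ ∑ s, x s i := by
  have hsub : insert t (Finset.univ.filter (fun s => s < t)) ⊆ Finset.univ :=
    Finset.subset_univ _
  have htn : t ∉ Finset.univ.filter (fun s => s < t) := by simp
  calc prevLoad x t i + x t i
      = ∑ s ∈ insert t (Finset.univ.filter (fun s => s < t)), x s i := by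
        rw [Finset.sum_insert htn, prevLoad]; ring
    _ ≤ ∑ s, x s i :=
        Finset.sum_le_sum_of_subset_of_nonneg hsub (fun s _ _ => hpos s i)

lemma level_ineq {n m : ℕ} {E : ReqSeq n m} {x y : Fin m → Fin n → ℝ} {T : ℝ}
    (hx : IsWFAlloc E x) (hy : Feasible E y) (hT : ∀ i, ∑ t, y t i ≤ T)
    (c : ℝ) (hc : 0 ≤ c) :
    ∑ i, max ((∑ t, x t i) - c) 0
      ≤ T * ((Finset.univ.filter (fun i : Fin n => c < ∑ t, x t i)).card : ℝ) := by
  classical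
  have hxpos : ∀ t i, 0 ≤ x t i := fun t i => (hx.1 t).1 i
  set L : Fin n → ℝ := fun i => ∑ t, x t i with hL
  set h : Fin m → ℝ := fun t => minOnNbhd E t (fun j => x t j + prevLoad x t j) with hh
  set Tc : Finset (Fin m) := Finset.univ.filter (fun t => c < h t) with hTc
  set Sc : Finset (Fin n) := Finset.univ.filter (fun i : Fin n => c < L i) with hSc
  -- every neighborhood of a high request is inside Sc
  have hNS : ∀ t ∈ Tc, E.N t ⊆ Sc := by
    intro t ht j hj
    have h1 : h t ≤ x t j + prevLoad x t j := Finset.inf'_le _ hj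
    have h2 : prevLoad x t j + x t j ≤ L j := prev_add_le_load hxpos t j
    have h3 : c < h t := (Finset.mem_filter.mp ht).2
    exact Finset.mem_filter.mpr ⟨Finset.mem_univ j, by linarith⟩
  -- step 1
  have step1 : ∀ i, max (L i - c) 0 ≤ ∑ t ∈ Tc, x t i := by
    intro i
    have hrhs : (0:ℝ) ≤ ∑ t ∈ Tc, x t i := Finset.sum_nonneg fun t _ => hxpos t i
    refine max_le ?_ hrhs
    have hcompl : ∑ t ∈ Tcᶜ, x t i ≤ c := by
      set S : Finset (Fin m) := Tcᶜ.filter (fun t => x t i ≠ 0) with hS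
      have hsum : ∑ t ∈ Tcᶜ, x t i = ∑ t ∈ S, x t i := by
        rw [hS, Finset.sum_filter_ne_zero]
      rcases S.eq_empty_or_nonempty with hSe | hSne
      · rw [hsum, hSe, Finset.sum_empty]; exact hc
      · set t0 := S.max' hSne with ht0
        have ht0S : t0 ∈ S := S.max'_mem hSne
        have ht0c : ¬ c < h t0 := by
          have := (Finset.mem_filter.mp ht0S).1
          simp only [Finset.mem_compl, hTc, Finset.mem_filter, Finset.mem_univ,
            true_and] at this
          exact this
        have hx0 : 0 < x t0 i := by
          have hne := (Finset.mem_filter.mp ht0S).2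
          exact lt_of_le_of_ne (hxpos t0 i) (Ne.symm hne)
        have hsub : S ⊆ insert t0 (Finset.univ.filter (fun s => s < t0)) := by
          intro s hs
          rcases eq_or_lt_of_le (S.le_max' s hs) with he | hl
          · exact Finset.mem_insert.mpr (Or.inl he)
          · exact Finset.mem_insert.mpr (Or.inr (by simpa [ht0] using hl))
        have hSle : ∑ t ∈ S, x t i ≤ x t0 i + prevLoad x t0 i := by
          calc ∑ t ∈ S, x t i
              ≤ ∑ t ∈ insert t0 (Finset.univ.filter (fun s => s < t0)), x t i :=
                Finset.sum_le_sum_of_subset_of_nonneg hsub (fun s _ _ => hxpos s i)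
            _ = x t0 i + prevLoad x t0 i := by
                rw [Finset.sum_insert (by simp), prevLoad]
        have hrec := wf_receiver hx t0 i hx0
        rw [hsum]
        calc ∑ t ∈ S, x t i ≤ x t0 i + prevLoad x t0 i := hSle
          _ ≤ h t0 := hrec
          _ ≤ c := not_lt.mp ht0c
    have hsplit : L i = ∑ t ∈ Tc, x t i + ∑ t ∈ Tcᶜ, x t i := by
      rw [hL]
      exact (Finset.sum_add_sum_compl Tc _).symm
    linarith
  -- step 2 and 3
  have step2 : ∑ i, ∑ t ∈ Tc, x t i = ∑ t ∈ Tc, E.q t := by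
    rw [Finset.sum_comm]
    exact Finset.sum_congr rfl fun t _ => (hx.1 t).2.2
  have step3 : ∑ t ∈ Tc, E.q t ≤ T * (Sc.card : ℝ) := by
    have hq : ∀ t ∈ Tc, E.q t = ∑ j ∈ Sc, y t j := by
      intro t ht
      have hyt := hy t
      rw [← hyt.2.2]
      refine (Finset.sum_subset (Finset.subset_univ Sc) ?_).symm
      intro j _ hj
      exact hyt.2.1 j (fun hjN => hj (hNS t ht hjN))
    calc ∑ t ∈ Tc, E.q t = ∑ t ∈ Tc, ∑ j ∈ Sc, y t j := Finset.sum_congr rfl hq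
      _ ≤ ∑ t, ∑ j ∈ Sc, y t j := by
          refine Finset.sum_le_sum_of_subset_of_nonneg (Finset.subset_univ Tc) ?_
          intro t _ _
          exact Finset.sum_nonneg fun j _ => (hy t).1 j
      _ = ∑ j ∈ Sc, ∑ t, y t j := Finset.sum_comm
      _ ≤ ∑ j ∈ Sc, T := Finset.sum_le_sum fun j _ => hT j
      _ = T * (Sc.card : ℝ) := by rw [Finset.sum_const, nsmul_eq_mul]; ring
  calc ∑ i, max (L i - c) 0 ≤ ∑ i, ∑ t ∈ Tc, x t i := Finset.sum_le_sum fun i _ => step1 i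
    _ = ∑ t ∈ Tc, E.q t := step2
    _ ≤ T * (Sc.card : ℝ) := step3

lemma harmonicNum_succ (k : ℕ) : harmonicNum (k+1) = harmonicNum k + 1/((k:ℝ)+1) := by
  rw [harmonicNum, harmonicNum, Finset.sum_range_succ]

lemma harmonicNum_one : harmonicNum 1 = 1 := by simp [harmonicNum]

lemma filter_ge_eq_Ici (n a : ℕ) (ha : a < n) :
    Finset.univ.filter (fun j : Fin n => a ≤ (j:ℕ)) = Finset.Ici (⟨a, ha⟩ : Fin n) := by
  ext j
  simp [Finset.mem_Ici, Fin.le_def]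

lemma card_filter_ge (n a : ℕ) (ha : a < n) :
    (Finset.univ.filter (fun j : Fin n => a ≤ (j:ℕ))).card = n - a := by
  rw [filter_ge_eq_Ici n a ha, Fin.card_Ici]

lemma sorted_bound {n : ℕ} (hn : 1 ≤ n) (W : Fin n → ℝ) (hW : Monotone W)
    (h0 : ∀ i, 0 ≤ W i) (T : ℝ) (hT : 0 ≤ T)
    (hB : ∀ c, 0 ≤ c → ∑ i, max (W i - c) 0
      ≤ T * ((Finset.univ.filter (fun i : Fin n => c < W i)).card : ℝ)) :
    W ⟨n - 1, sub_one_lt_self_aux n hn⟩ ≤ harmonicNum n * T := by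
  classical
  set A : ℕ → ℝ := fun k => ∑ j ∈ Finset.univ.filter (fun j : Fin n => n - k ≤ (j:ℕ)), W j
    with hA
  -- A n ≤ n * T
  have hAn : A n ≤ (n:ℝ) * T := by
    have hfull : Finset.univ.filter (fun j : Fin n => n - n ≤ (j:ℕ)) = Finset.univ := by
      refine Finset.filter_true_of_mem fun j _ => by omega
    have h1 := hB 0 le_rfl
    have h2 : ∑ i, max (W i - 0) 0 = ∑ i : Fin n, W i := by
      refine Finset.sum_congr rfl fun i _ => ?_
      rw [sub_zero, max_eq_left (h0 i)]
    have h3 : ((Finset.univ.filter (fun i : Fin n => (0:ℝ) < W i)).card : ℝ) ≤ (n:ℝ) := by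
      have := Finset.card_filter_le Finset.univ (fun i : Fin n => (0:ℝ) < W i)
      simp only [Finset.card_univ, Fintype.card_fin] at this
      exact_mod_cast this
    have h4 : T * ((Finset.univ.filter (fun i : Fin n => (0:ℝ) < W i)).card : ℝ) ≤ T * n :=
      mul_le_mul_of_nonneg_left h3 hT
    rw [hA]
    dsimp only
    rw [hfull]
    rw [h2] at h1
    linarith
  -- the recurrence A k ≤ k*T + k * W ⟨n-1-k⟩ for 1 ≤ k ≤ n-1
  have hrec : ∀ k, 1 ≤ k → k ≤ n - 1 →
      A k ≤ (k:ℝ) * T + (k:ℝ) * W ⟨n - 1 - k, by omega⟩ := by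
    intro k hk1 hkn
    set c := W ⟨n - 1 - k, by omega⟩ with hc
    have hc0 : 0 ≤ c := h0 _
    have hcard : ((Finset.univ.filter (fun i : Fin n => c < W i)).card : ℝ) ≤ (k:ℝ) := by
      have hsub : Finset.univ.filter (fun i : Fin n => c < W i)
          ⊆ Finset.univ.filter (fun j : Fin n => n - k ≤ (j:ℕ)) := by
        intro i hi
        have hci : c < W i := (Finset.mem_filter.mp hi).2
        refine Finset.mem_filter.mpr ⟨Finset.mem_univ i, ?_⟩
        by_contra hlt
        push_neg at hlt
        have : (i:ℕ) ≤ n - 1 - k := by omega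
        have : W i ≤ c := hW (Fin.le_def.mpr this)
        linarith
      have h1 := Finset.card_le_card hsub
      have h2 : (Finset.univ.filter (fun j : Fin n => n - k ≤ (j:ℕ))).card = k := by
        rw [card_filter_ge n (n-k) (by omega)]; omega
      rw [h2] at h1
      exact_mod_cast h1
    have hlow : A k - (k:ℝ) * c ≤ ∑ i, max (W i - c) 0 := by
      have h1 : ∀ j ∈ Finset.univ.filter (fun j : Fin n => n - k ≤ (j:ℕ)),
          W j - c ≤ max (W j - c) 0 := fun j _ => le_max_left _ _
      have h2 : ∑ j ∈ Finset.univ.filter (fun j : Fin n => n - k ≤ (j:ℕ)), (W j - c)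
          ≤ ∑ j ∈ Finset.univ.filter (fun j : Fin n => n - k ≤ (j:ℕ)), max (W j - c) 0 :=
        Finset.sum_le_sum h1
      have h3 : ∑ j ∈ Finset.univ.filter (fun j : Fin n => n - k ≤ (j:ℕ)), max (W j - c) 0
          ≤ ∑ i, max (W i - c) 0 :=
        Finset.sum_le_sum_of_subset_of_nonneg (Finset.filter_subset _ _)
          (fun i _ _ => le_max_right _ _)
      have h4 : ∑ j ∈ Finset.univ.filter (fun j : Fin n => n - k ≤ (j:ℕ)), (W j - c)
          = A k - (k:ℝ) * c := by
        rw [Finset.sum_sub_distrib, Finset.sum_const, hA]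
        dsimp only
        rw [card_filter_ge n (n-k) (by omega), nsmul_eq_mul]
        have hnk : (n - (n - k) : ℕ) = k := by omega
        rw [hnk]
      linarith
    have := hB c hc0
    have hTc : T * ((Finset.univ.filter (fun i : Fin n => c < W i)).card : ℝ) ≤ T * k :=
      mul_le_mul_of_nonneg_left hcard hT
    rw [hc] at *
    linarith
  -- A (k+1) = A k + W ⟨n-1-k⟩ for 1 ≤ k ≤ n-1
  have hstep : ∀ k, 1 ≤ k → k ≤ n - 1 →
      A (k+1) = A k + W ⟨n - 1 - k, by omega⟩ := by
    intro k hk1 hkn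
    have hins : Finset.univ.filter (fun j : Fin n => n - (k+1) ≤ (j:ℕ))
        = insert (⟨n - 1 - k, by omega⟩ : Fin n)
            (Finset.univ.filter (fun j : Fin n => n - k ≤ (j:ℕ))) := by
      ext j
      simp only [Finset.mem_filter, Finset.mem_univ, true_and, Finset.mem_insert]
      constructor
      · intro hj
        rcases Nat.lt_or_ge (j:ℕ) (n - k) with h | h
        · left; exact Fin.ext (show (j:ℕ) = n - 1 - k by omega)
        · right; exact h
      · rintro (hj | hj)
        · subst hj; exact (by omega : n - (k+1) ≤ n - 1 - k)
        · omega
    have hnotmem : (⟨n - 1 - k, by omega⟩ : Fin n)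
        ∉ Finset.univ.filter (fun j : Fin n => n - k ≤ (j:ℕ)) := by
      simp; omega
    rw [hA]
    simp only
    rw [hins, Finset.sum_insert hnotmem]
    ring
  -- downward induction
  have hmain : ∀ d, d ≤ n - 1 →
      A (n - d) ≤ ((n-d : ℕ):ℝ) * (harmonicNum n - harmonicNum (n-d) + 1) * T := by
    intro d
    induction d with
    | zero =>
      intro _
      simpa using hAn
    | succ d ih =>
      intro hd
      have hd' : d ≤ n - 1 := by omega
      have ihv := ih hd'
      set k := n - (d+1) with hk
      have hk1 : 1 ≤ k := by omega
      have hkn : k ≤ n - 1 := by omega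
      have hkd : n - d = k + 1 := by omega
      rw [hkd] at ihv
      have hr := hrec k hk1 hkn
      have hs := hstep k hk1 hkn
      -- W term = A(k+1) - A k
      have hW' : W ⟨n - 1 - k, by omega⟩ = A (k+1) - A k := by linarith
      rw [hW'] at hr
      -- (k+1) A k ≤ k T + k A(k+1)
      have h1 : ((k:ℝ)+1) * A k ≤ (k:ℝ) * T + (k:ℝ) * A (k+1) := by nlinarith
      have h2 : A (k+1) ≤ ((k:ℝ)+1) * (harmonicNum n - harmonicNum (k+1) + 1) * T := by
        rw [show (((k+1 : ℕ)):ℝ) = (k:ℝ)+1 by push_cast; ring] at ihv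
        exact ihv
      have hkpos : (0:ℝ) < (k:ℝ) + 1 := by positivity
      have hknn : (0:ℝ) ≤ (k:ℝ) := by positivity
      have hHs : harmonicNum (k+1) = harmonicNum k + 1/((k:ℝ)+1) := harmonicNum_succ k
      have hgoal : ((k:ℝ)+1) * A k ≤ ((k:ℝ)+1) * ((k:ℝ) * (harmonicNum n - harmonicNum k + 1) * T) := by
        have h3 : (k:ℝ) * A (k+1) ≤ (k:ℝ) * (((k:ℝ)+1) * (harmonicNum n - harmonicNum (k+1) + 1) * T) :=
          mul_le_mul_of_nonneg_left h2 hknn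
        have h4 : (k:ℝ) * (((k:ℝ)+1) * (harmonicNum n - harmonicNum (k+1) + 1) * T)
            = ((k:ℝ)+1) * ((k:ℝ) * (harmonicNum n - harmonicNum k + 1) * T) - (k:ℝ) * T := by
          rw [hHs]
          field_simp
          ring
        linarith
      have := le_of_mul_le_mul_left (by linarith [hgoal] : ((k:ℝ)+1) * A k ≤ ((k:ℝ)+1) * ((k:ℝ) * (harmonicNum n - harmonicNum k + 1) * T)) hkpos
      simpa [hk] using this
  -- conclude with k = 1
  have h1 := hmain (n-1) le_rfl
  have hn1 : n - (n-1) = 1 := by omega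
  rw [hn1] at h1
  have hA1 : A 1 = W ⟨n - 1, by omega⟩ := by
    rw [hA]
    simp only
    have : Finset.univ.filter (fun j : Fin n => n - 1 ≤ (j:ℕ))
        = {(⟨n - 1, by omega⟩ : Fin n)} := by
      ext j
      simp only [Finset.mem_filter, Finset.mem_univ, true_and, Finset.mem_singleton]
      constructor
      · intro hj; exact Fin.ext (show (j:ℕ) = n - 1 by omega)
      · intro hj; subst hj; exact (le_refl (n-1))
    rw [this, Finset.sum_singleton]
  rw [hA1] at h1
  rw [harmonicNum_one] at h1
  calc W ⟨n - 1, by omega⟩ ≤ (1:ℝ) * (harmonicNum n - 1 + 1) * T := by simpa using h1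
    _ = harmonicNum n * T := by ring

lemma all_le_harmonic {n : ℕ} (hn : 1 ≤ n) (L : Fin n → ℝ) (T : ℝ) (hT : 0 ≤ T)
    (hL0 : ∀ i, 0 ≤ L i)
    (hB : ∀ c, 0 ≤ c → ∑ i, max (L i - c) 0
      ≤ T * ((Finset.univ.filter (fun i : Fin n => c < L i)).card : ℝ)) :
    ∀ i, L i ≤ harmonicNum n * T := by
  classical
  set σ := Tuple.sort L with hσ
  set W : Fin n → ℝ := L ∘ σ with hW
  have hWmono : Monotone W := Tuple.monotone_sort L
  have hW0 : ∀ i, 0 ≤ W i := fun i => hL0 (σ i)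
  have hWB : ∀ c, 0 ≤ c → ∑ i, max (W i - c) 0
      ≤ T * ((Finset.univ.filter (fun i : Fin n => c < W i)).card : ℝ) := by
    intro c hc
    have hsum : ∑ i, max (W i - c) 0 = ∑ i, max (L i - c) 0 :=
      Equiv.sum_comp σ (fun i => max (L i - c) 0)
    have hcard : (Finset.univ.filter (fun i : Fin n => c < W i)).card
        = (Finset.univ.filter (fun i : Fin n => c < L i)).card := by
      refine Finset.card_nbij' (fun i => σ i) (fun j => σ.symm j) ?_ ?_ ?_ ?_
      · intro i hi
        simp only [Finset.mem_coe, Finset.mem_filter, Finset.mem_univ, true_and] at *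
        exact hi
      · intro j hj
        simp only [Finset.mem_coe, Finset.mem_filter, Finset.mem_univ, true_and] at *
        show c < L (σ (σ.symm j))
        rwa [Equiv.apply_symm_apply]
      · intro i _; exact σ.symm_apply_apply i
      · intro j _; exact σ.apply_symm_apply j
    rw [hsum, hcard]
    exact hB c hc
  have hmax := sorted_bound hn W hWmono hW0 T hT hWB
  intro i
  have : L i = W (σ.symm i) := by
    show L i = L (σ (σ.symm i))
    rw [Equiv.apply_symm_apply]
  rw [this]
  refine le_trans (hWmono (Fin.le_def.mpr ?_)) hmax
  show ((σ.symm i : Fin n) : ℕ) ≤ n - 1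
  omega

lemma harmonicNum_nonneg (n : ℕ) : 0 ≤ harmonicNum n :=
  Finset.sum_nonneg fun i _ => by positivity

lemma maxEntry_zero {n : ℕ} (hn : 1 ≤ n) : maxEntry (fun _ : Fin n => (0:ℝ)) = 0 := by
  have : Nonempty (Fin n) := ⟨⟨0, by omega⟩⟩
  rw [maxEntry, Set.range_const, csSup_singleton]

lemma ratio3_le {n m : ℕ} (hn : 1 ≤ n) (E : ReqSeq n m) :
    maxEntry (wfLoad E) / maxEntry (optLoad E) ≤ harmonicNum n := by
  classical
  have hNZ : NeZero n := ⟨by omega⟩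
  have hHn := harmonicNum_nonneg n
  by_cases hW : ∃ x, IsWFAlloc E x
  · by_cases hO : ∃ ℓ, IsOpt E ℓ
    · set x := hW.choose with hxdef
      have hx : IsWFAlloc E x := hW.choose_spec
      set ℓ := hO.choose with hℓdef
      have hℓ : IsOpt E ℓ := hO.choose_spec
      obtain ⟨⟨y, hy, hℓeq⟩, _⟩ := hℓ
      have hwf : wfLoad E = ∑ t, x t := by rw [wfLoad, dif_pos hW]
      have hopt : optLoad E = ℓ := by rw [optLoad, dif_pos hO]
      set T := maxEntry ℓ with hTdef
      have hℓi : ∀ i, ℓ i = ∑ t, y t i := by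
        intro i; rw [hℓeq]; exact Finset.sum_apply i _ y
      have hℓ0 : ∀ i, 0 ≤ ℓ i := by
        intro i; rw [hℓi]
        exact Finset.sum_nonneg fun t _ => (hy t).1 i
      have hT0 : 0 ≤ T := le_trans (hℓ0 ⟨0, by omega⟩) (le_maxEntry ℓ _)
      have hTub : ∀ i, ∑ t, y t i ≤ T := by
        intro i; rw [← hℓi]; exact le_maxEntry ℓ i
      have hB := fun c hc => level_ineq hx hy hTub c hc
      have hL0 : ∀ i, 0 ≤ ∑ t, x t i :=
        fun i => Finset.sum_nonneg fun t _ => (hx.1 t).1 i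
      have hall := all_le_harmonic hn (fun i => ∑ t, x t i) T hT0 hL0 hB
      have hwfle : maxEntry (wfLoad E) ≤ harmonicNum n * T := by
        rw [hwf]
        refine maxEntry_le _ _ fun i => ?_
        rw [Finset.sum_apply i _ x]
        exact hall i
      rw [hopt, ← hTdef]
      rcases eq_or_lt_of_le hT0 with hT | hT
      · rw [← hT, div_zero]; exact hHn
      · rw [div_le_iff₀ hT]
        exact hwfle.trans_eq (by ring)
    · rw [optLoad, dif_neg hO]
      rw [show (0 : Fin n → ℝ) = (fun _ : Fin n => (0:ℝ)) from rfl, maxEntry_zero hn, div_zero]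
      exact hHn
  · rw [wfLoad, dif_neg hW]
    rw [show (0 : Fin n → ℝ) = (fun _ : Fin n => (0:ℝ)) from rfl, maxEntry_zero hn, zero_div]
    exact hHn

lemma exists_ge_avg {α : Type*} [DecidableEq α] (s : Finset α) (hs : s.Nonempty) (f : α → ℝ) :
    ∃ j ∈ s, ∑ i ∈ s, f i ≤ (s.card : ℝ) * f j := by
  have hcpos : (0:ℝ) < (s.card : ℝ) := by
    have := Finset.card_pos.mpr hs
    exact_mod_cast this
  have hsum : ∑ i ∈ s, (∑ i' ∈ s, f i') / (s.card : ℝ) ≤ ∑ i ∈ s, f i := by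
    rw [Finset.sum_const, nsmul_eq_mul, mul_div_cancel₀ _ (ne_of_gt hcpos)]
  obtain ⟨j, hj, hjle⟩ := Finset.exists_le_of_sum_le hs hsum
  refine ⟨j, hj, ?_⟩
  rw [div_le_iff₀ hcpos] at hjle
  linarith

lemma topk_avg {n : ℕ} (f : Fin n → ℝ) (hf : ∀ i, 0 ≤ f i) :
    ∀ k ≤ n, ∃ s : Finset (Fin n), s.card = k ∧
      (k:ℝ) * ∑ i, f i ≤ (n:ℝ) * ∑ i ∈ s, f i := by
  intro k
  induction k with
  | zero =>
    intro _
    exact ⟨∅, Finset.card_empty, by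
      simp only [Nat.cast_zero, zero_mul, Finset.sum_empty, mul_zero]
      exact le_refl 0⟩
  | succ k ih =>
    intro hk
    obtain ⟨s, hcard, hsum⟩ := ih (by omega)
    have hcompl : (sᶜ : Finset (Fin n)).Nonempty := by
      rw [← Finset.card_pos, Finset.card_compl, hcard, Fintype.card_fin]
      omega
    obtain ⟨j, hj, hjavg⟩ := exists_ge_avg sᶜ hcompl f
    refine ⟨insert j s, ?_, ?_⟩
    · rw [Finset.card_insert_of_notMem (Finset.mem_compl.mp hj), hcard]
    · rw [Finset.sum_insert (Finset.mem_compl.mp hj)]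
      have hkn : (k:ℝ) + 1 ≤ (n:ℝ) := by exact_mod_cast hk
      have hcc : (sᶜ.card : ℝ) = (n:ℝ) - k := by
        rw [Finset.card_compl, hcard, Fintype.card_fin, Nat.cast_sub (by omega)]
      have hsplit : ∑ i ∈ sᶜ, f i = ∑ i, f i - ∑ i ∈ s, f i := by
        have := Finset.sum_add_sum_compl s f
        linarith
      rw [hcc, hsplit] at hjavg
      set Sf := ∑ i, f i with hSf
      set Ss := ∑ i ∈ s, f i with hSs
      have hnkpos : (0:ℝ) < (n:ℝ) - k := by linarith
      have hnk1 : (0:ℝ) ≤ (n:ℝ) - k - 1 := by linarith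
      have e1 : (0:ℝ) ≤ ((n:ℝ) - k - 1) * ((n:ℝ)*Ss - k*Sf) :=
        mul_nonneg hnk1 (by linarith)
      have hn0 : (0:ℝ) ≤ (n:ℝ) := Nat.cast_nonneg n
      have e2 : (n:ℝ) * (Sf - Ss) ≤ (n:ℝ) * (((n:ℝ) - k) * f j) :=
        mul_le_mul_of_nonneg_left hjavg hn0
      have key : (((k:ℝ)+1)*Sf - (n:ℝ)*Ss) * ((n:ℝ) - k) ≤ (n:ℝ) * (Sf - Ss) := by
        nlinarith [e1]
      have e3 : (((k:ℝ)+1)*Sf - (n:ℝ)*Ss) * ((n:ℝ) - k) ≤ ((n:ℝ) * f j) * ((n:ℝ) - k) := by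
        calc (((k:ℝ)+1)*Sf - (n:ℝ)*Ss) * ((n:ℝ) - k) ≤ (n:ℝ) * (Sf - Ss) := key
          _ ≤ (n:ℝ) * (((n:ℝ) - k) * f j) := e2
          _ = ((n:ℝ) * f j) * ((n:ℝ) - k) := by ring
      have e4 := le_of_mul_le_mul_right e3 hnkpos
      push_cast
      linarith

lemma topSum_bddAbove {n : ℕ} (x : Fin n → ℝ) (k : ℕ) :
    BddAbove ((fun s : Finset (Fin n) => ∑ i ∈ s, x i) '' {s | s.card = k}) :=
  (Set.toFinite _).image _ |>.bddAbove

lemma topSum_nonempty {n : ℕ} (x : Fin n → ℝ) (k : ℕ) (hk : k ≤ n) :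
    ((fun s : Finset (Fin n) => ∑ i ∈ s, x i) '' {s | s.card = k}).Nonempty := by
  obtain ⟨t, _, ht⟩ := Finset.exists_subset_card_eq (s := (Finset.univ : Finset (Fin n))) (n := k)
    (by simpa using hk)
  exact ⟨∑ i ∈ t, x i, ⟨t, ht, rfl⟩⟩

lemma le_topSum {n : ℕ} (x : Fin n → ℝ) (k : ℕ) (s : Finset (Fin n)) (hs : s.card = k) :
    ∑ i ∈ s, x i ≤ topSum x k :=
  le_csSup (topSum_bddAbove x k) ⟨s, hs, rfl⟩

lemma topSum_le {n : ℕ} (x : Fin n → ℝ) (k : ℕ) (hk : k ≤ n) (c : ℝ)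
    (h : ∀ s : Finset (Fin n), s.card = k → ∑ i ∈ s, x i ≤ c) : topSum x k ≤ c := by
  refine csSup_le (topSum_nonempty x k hk) ?_
  rintro r ⟨s, hs, rfl⟩
  exact h s hs

lemma topSum_one_eq_maxEntry {n : ℕ} (hn : 1 ≤ n) (x : Fin n → ℝ) :
    topSum x 1 = maxEntry x := by
  have : ((fun s : Finset (Fin n) => ∑ i ∈ s, x i) '' {s | s.card = 1}) = Set.range x := by
    ext c
    constructor
    · rintro ⟨s, hs, rfl⟩
      obtain ⟨a, rfl⟩ := Finset.card_eq_one.mp hs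
      exact ⟨a, (Finset.sum_singleton x a).symm⟩
    · rintro ⟨i, rfl⟩
      exact ⟨{i}, Finset.card_singleton i, Finset.sum_singleton x i⟩
  rw [topSum, this, maxEntry]

lemma topSum_ones {n : ℕ} (k : ℕ) (hk : k ≤ n) :
    topSum (fun _ : Fin n => (1:ℝ)) k = (k:ℝ) := by
  refine le_antisymm (topSum_le _ k hk _ fun s hs => ?_) ?_
  · rw [Finset.sum_const, nsmul_eq_mul, mul_one, hs]
  · obtain ⟨t, _, ht⟩ := Finset.exists_subset_card_eq (s := (Finset.univ : Finset (Fin n))) (n := k)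
      (by simpa using hk)
    have := le_topSum (fun _ : Fin n => (1:ℝ)) k t ht
    rwa [Finset.sum_const, nsmul_eq_mul, mul_one, ht] at this

/-- The hard instance: `n` unit requests, request `t` compatible with nodes `≥ t`. -/
def E0 (n : ℕ) : ReqSeq n n where
  N := fun t => Finset.univ.filter (fun i => t ≤ i)
  q := fun _ => 1
  N_nonempty := fun t => ⟨t, Finset.mem_filter.mpr ⟨Finset.mem_univ t, le_refl t⟩⟩
  q_pos := fun _ => one_pos

noncomputable def xWF (n : ℕ) : Fin n → Fin n → ℝ :=
  fun t i => if t ≤ i then 1/((n - (t:ℕ) : ℕ):ℝ) else 0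

lemma E0_N_card {n : ℕ} (t : Fin n) : ((E0 n).N t).card = n - (t:ℕ) := by
  have : (E0 n).N t = Finset.Ici t := by
    ext j; simp [E0, Finset.mem_Ici]
  rw [this, Fin.card_Ici]

lemma E0_N_card_pos {n : ℕ} (t : Fin n) : (0:ℝ) < ((n - (t:ℕ) : ℕ):ℝ) := by
  have : (t:ℕ) < n := t.isLt
  exact_mod_cast Nat.sub_pos_of_lt this

lemma xWF_feasible (n : ℕ) : Feasible (E0 n) (xWF n) := by
  intro t
  refine ⟨fun i => ?_, fun i hi => ?_, ?_⟩
  · rw [xWF]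
    split_ifs
    · positivity
    · exact le_refl 0
  · rw [xWF]
    rw [if_neg]
    intro hle
    exact hi (Finset.mem_filter.mpr ⟨Finset.mem_univ i, hle⟩)
  · have h1 : ∑ i, xWF n t i
        = ∑ i ∈ Finset.univ.filter (fun i : Fin n => t ≤ i), (1/((n - (t:ℕ) : ℕ):ℝ)) :=
      (Finset.sum_filter _ _).symm
    have h2 : (Finset.univ.filter (fun i : Fin n => t ≤ i)).card = n - (t:ℕ) := E0_N_card t
    show ∑ i, xWF n t i = (E0 n).q t
    rw [h1, Finset.sum_const, h2, nsmul_eq_mul, mul_one_div,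
      div_self (ne_of_gt (E0_N_card_pos t))]
    rfl


noncomputable def P0 (n : ℕ) (t : Fin n) : ℝ :=
  ∑ s ∈ Finset.univ.filter (fun s => s < t), 1/((n - (s:ℕ) : ℕ):ℝ)

lemma mem_E0N {n : ℕ} (t j : Fin n) : j ∈ (E0 n).N t ↔ t ≤ j := by simp [E0]

lemma prev_const {n : ℕ} (x : Fin n → Fin n → ℝ) (t : Fin n)
    (hx : ∀ s, s < t → x s = xWF n s) (i : Fin n) (hi : t ≤ i) :
    prevLoad x t i = P0 n t := by
  rw [prevLoad, P0]
  refine Finset.sum_congr rfl fun s hs => ?_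
  have hst : s < t := (Finset.mem_filter.mp hs).2
  rw [hx s hst, xWF, if_pos (le_of_lt (lt_of_lt_of_le hst hi))]

lemma minOn_const_like {n : ℕ} (t : Fin n) (v : Fin n → ℝ) (c : ℝ)
    (hv : ∀ j ∈ (E0 n).N t, v j = c) : minOnNbhd (E0 n) t v = c := by
  have htN : t ∈ (E0 n).N t := (mem_E0N t t).mpr (le_refl t)
  refine le_antisymm ?_ ?_
  · exact le_of_le_of_eq (Finset.inf'_le v htN) (hv t htN)
  · exact Finset.le_inf' _ _ fun j hj => le_of_eq (hv j hj).symm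

lemma xWF_isWF (n : ℕ) : IsWFAlloc (E0 n) (xWF n) := by
  refine ⟨xWF_feasible n, ?_⟩
  intro t y hy
  have hprev : ∀ i, t ≤ i → prevLoad (xWF n) t i = P0 n t :=
    prev_const (xWF n) t (fun s _ => rfl)
  have hR : minOnNbhd (E0 n) t (fun i => xWF n t i + prevLoad (xWF n) t i)
      = P0 n t + 1/((n - (t:ℕ) : ℕ):ℝ) := by
    refine minOn_const_like t _ _ fun j hj => ?_
    have htj : t ≤ j := (mem_E0N t j).mp hj
    rw [hprev j htj, xWF, if_pos htj]
    ring
  have hq1 : (E0 n).q t = 1 := rfl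
  have hsumy : ∑ j ∈ (E0 n).N t, y j = 1 := by
    rw [sum_eq_sum_N hy, hq1]
  have hsumc : ∑ j ∈ (E0 n).N t, (1/((n - (t:ℕ) : ℕ):ℝ)) = 1 := by
    rw [Finset.sum_const, E0_N_card, nsmul_eq_mul, mul_one_div,
      div_self (ne_of_gt (E0_N_card_pos t))]
  obtain ⟨j, hjN, hjle⟩ := Finset.exists_le_of_sum_le ((E0 n).N_nonempty t)
    (le_of_eq (hsumy.trans hsumc.symm))
  have htj : t ≤ j := (mem_E0N t j).mp hjN
  calc minOnNbhd (E0 n) t (fun i => y i + prevLoad (xWF n) t i)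
      ≤ y j + prevLoad (xWF n) t j := Finset.inf'_le _ hjN
    _ ≤ 1/((n - (t:ℕ) : ℕ):ℝ) + P0 n t := by rw [hprev j htj]; linarith
    _ = minOnNbhd (E0 n) t (fun i => xWF n t i + prevLoad (xWF n) t i) := by rw [hR]; ring

lemma wf_unique {n : ℕ} (x : Fin n → Fin n → ℝ) (hx : IsWFAlloc (E0 n) x) :
    ∀ t, x t = xWF n t := by
  classical
  have key : ∀ K : ℕ, ∀ t : Fin n, (t:ℕ) < K → x t = xWF n t := by
    intro K
    induction K with
    | zero => intro t ht; omega
    | succ K ih =>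
      intro t ht
      rcases Nat.lt_or_ge (t:ℕ) K with h | h
      · exact ih t h
      · have hprevx : ∀ i, t ≤ i → prevLoad x t i = P0 n t := by
          refine prev_const x t (fun s hs => ?_)
          exact ih s (by have := Fin.lt_def.mp hs; omega)
        have hxt := hx.1 t
        have hq1 : (E0 n).q t = 1 := rfl
        -- the WF optimality against the equal-split allocation
        have hopt := hx.2 t (xWF n t) (xWF_feasible n t)
        have hL : minOnNbhd (E0 n) t (fun i => xWF n t i + prevLoad x t i)
            = P0 n t + 1/((n - (t:ℕ) : ℕ):ℝ) := by
          refine minOn_const_like t _ _ fun j hj => ?_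
          have htj : t ≤ j := (mem_E0N t j).mp hj
          rw [hprevx j htj, xWF, if_pos htj]
          ring
        rw [hL] at hopt
        -- every node in N t gets at least 1/(n-t)
        have hge : ∀ j ∈ (E0 n).N t, 1/((n - (t:ℕ) : ℕ):ℝ) ≤ x t j := by
          intro j hj
          have htj : t ≤ j := (mem_E0N t j).mp hj
          have h1 : minOnNbhd (E0 n) t (fun i => x t i + prevLoad x t i)
              ≤ x t j + prevLoad x t j := Finset.inf'_le _ hj
          rw [hprevx j htj] at h1
          linarith
        have hsumx : ∑ j ∈ (E0 n).N t, x t j = 1 := by rw [sum_eq_sum_N hxt, hq1]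
        have hsumc : ∑ j ∈ (E0 n).N t, (1/((n - (t:ℕ) : ℕ):ℝ)) = 1 := by
          rw [Finset.sum_const, E0_N_card, nsmul_eq_mul, mul_one_div,
            div_self (ne_of_gt (E0_N_card_pos t))]
        have heq : ∀ j ∈ (E0 n).N t, (1/((n - (t:ℕ) : ℕ):ℝ)) = x t j := by
          rw [← Finset.sum_eq_sum_iff_of_le hge]
          rw [hsumx, hsumc]
        funext i
        by_cases hiN : i ∈ (E0 n).N t
        · have htj : t ≤ i := (mem_E0N t i).mp hiN
          rw [← heq i hiN, xWF, if_pos htj]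
        · have h1 : x t i = 0 := hxt.2.1 i hiN
          have h2 : ¬ t ≤ i := fun hc => hiN ((mem_E0N t i).mpr hc)
          rw [h1, xWF, if_neg h2]
  intro t
  exact key n t t.isLt

lemma ones_mem_loads (n : ℕ) : (fun _ : Fin n => (1:ℝ)) ∈ loads (E0 n) := by
  classical
  refine ⟨fun t i => if i = t then 1 else 0, ?_, ?_⟩
  · intro t
    refine ⟨fun i => ?_, fun i hi => ?_, ?_⟩
    · show (0:ℝ) ≤ if i = t then 1 else 0
      split_ifs <;> norm_num
    · show (if i = t then (1:ℝ) else 0) = 0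
      rw [if_neg]
      intro he
      exact hi ((mem_E0N t i).mpr (le_of_eq he.symm))
    · show (∑ i : Fin n, if i = t then (1:ℝ) else 0) = (E0 n).q t
      rw [Finset.sum_ite_eq' Finset.univ t (fun _ => (1:ℝ)), if_pos (Finset.mem_univ t)]
      rfl
  · funext i
    rw [Finset.sum_apply]
    rw [show (∑ t : Fin n, if i = t then (1:ℝ) else 0) = 1 by
      rw [Finset.sum_ite_eq Finset.univ i (fun _ => (1:ℝ)), if_pos (Finset.mem_univ i)]]

lemma loads_sum {n : ℕ} {ℓ : Fin n → ℝ} (h : ℓ ∈ loads (E0 n)) :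
    (∀ i, 0 ≤ ℓ i) ∧ ∑ i, ℓ i = (n:ℝ) := by
  obtain ⟨x, hx, rfl⟩ := h
  constructor
  · intro i
    rw [Finset.sum_apply]
    exact Finset.sum_nonneg fun t _ => (hx t).1 i
  · have h1 : ∀ i : Fin n, (∑ t, x t) i = ∑ t, x t i := fun i => Finset.sum_apply i _ x
    calc ∑ i, (∑ t, x t) i = ∑ i, ∑ t, x t i := Finset.sum_congr rfl fun i _ => h1 i
      _ = ∑ t, ∑ i, x t i := Finset.sum_comm
      _ = ∑ t : Fin n, (1:ℝ) := Finset.sum_congr rfl fun t _ => (hx t).2.2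
      _ = (n:ℝ) := by simp

lemma ones_isOpt (n : ℕ) : IsOpt (E0 n) (fun _ : Fin n => (1:ℝ)) := by
  refine ⟨ones_mem_loads n, ?_⟩
  intro ℓ' hℓ'
  obtain ⟨hpos, hsum⟩ := loads_sum hℓ'
  constructor
  · rw [hsum]
    simp
  · intro k hk
    rw [topSum_ones k hk]
    obtain ⟨s, hcard, hks⟩ := topk_avg ℓ' hpos k hk
    rw [hsum] at hks
    have hle : (k:ℝ) ≤ ∑ i ∈ s, ℓ' i := by
      rcases Nat.eq_zero_or_pos n with h0 | h0
      · have hk0 : k = 0 := by omega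
        subst hk0
        have : s = ∅ := Finset.card_eq_zero.mp (by omega)
        subst this
        simp
      · have hn0 : (0:ℝ) < (n:ℝ) := by exact_mod_cast h0
        by_contra hcon
        push_neg at hcon
        have := mul_lt_mul_of_pos_left hcon hn0
        nlinarith [hks]
    exact hle.trans (le_topSum ℓ' k s hcard)

lemma opt_maxEntry_one {n : ℕ} (hn : 1 ≤ n) (ℓ0 : Fin n → ℝ) (h : IsOpt (E0 n) ℓ0) :
    maxEntry ℓ0 = 1 := by
  have h1 : topSum ℓ0 1 ≤ topSum (fun _ : Fin n => (1:ℝ)) 1 :=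
    (h.2 _ (ones_mem_loads n)).2 1 hn
  have h2 : topSum (fun _ : Fin n => (1:ℝ)) 1 ≤ topSum ℓ0 1 :=
    ((ones_isOpt n).2 ℓ0 h.1).2 1 hn
  have h3 : topSum ℓ0 1 = topSum (fun _ : Fin n => (1:ℝ)) 1 := le_antisymm h1 h2
  rw [topSum_one_eq_maxEntry hn, topSum_one_eq_maxEntry hn] at h3
  rw [h3]
  have : Nonempty (Fin n) := ⟨⟨0, by omega⟩⟩
  rw [maxEntry, Set.range_const, csSup_singleton]

lemma wfLoad_E0 {n : ℕ} (hn : 1 ≤ n) : maxEntry (wfLoad (E0 n)) = harmonicNum n := by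
  have hex : ∃ x, IsWFAlloc (E0 n) x := ⟨xWF n, xWF_isWF n⟩
  have hval : wfLoad (E0 n) = ∑ t, xWF n t := by
    rw [wfLoad, dif_pos hex]
    have huniq := wf_unique _ hex.choose_spec
    exact Finset.sum_congr rfl fun t _ => huniq t
  have hHv : wfLoad (E0 n) = Hvec n (fun _ => 1) := by
    rw [hval]
    funext i
    rw [Finset.sum_apply, Hvec]
    simp only [xWF]
    rw [← Finset.sum_filter (fun t : Fin n => t ≤ i) (fun t => 1/((n - (t:ℕ) : ℕ):ℝ))]
  rw [hHv, maxEntry_monotone hn _ (Hvec_monotone n _ (fun _ => zero_le_one)),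
    Hvec_last n hn, ← harmonic_sum_eq n]

lemma optLoad_E0 {n : ℕ} (hn : 1 ≤ n) : maxEntry (optLoad (E0 n)) = 1 := by
  have hex : ∃ ℓ, IsOpt (E0 n) ℓ := ⟨fun _ => 1, ones_isOpt n⟩
  rw [optLoad, dif_pos hex]
  exact opt_maxEntry_one hn _ hex.choose_spec

lemma part3_eq (n : ℕ) (hn : 1 ≤ n) :
    sSup {r : ℝ | ∃ (m : ℕ) (E : ReqSeq n m), 0 < ∑ t, E.q t ∧
        r = maxEntry (wfLoad E) / maxEntry (optLoad E)} = harmonicNum n := by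
  refine IsGreatest.csSup_eq ⟨⟨n, E0 n, ?_, ?_⟩, ?_⟩
  · show (0:ℝ) < ∑ t : Fin n, (1:ℝ)
    simp only [Finset.sum_const, Finset.card_univ, Fintype.card_fin, nsmul_eq_mul, mul_one]
    exact_mod_cast hn
  · rw [wfLoad_E0 hn, optLoad_E0 hn, div_one]
  · rintro r ⟨m, E, _, rfl⟩
    exact ratio3_le hn E

/-- **Lemma (Makespan Competitive Ratio).**
`sup { Minimax(Hℓ)/Minimax(ℓ) : 0 ≤ ℓ(1) ≤ ⋯ ≤ ℓ(n), ℓ(n) > 0 } = H_n`; equivalently the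
supremum over such `ℓ` of `(Σ_i ℓ(i)/(n − i + 1))/ℓ(n)` equals `H_n`, and the competitive
ratio of water-filling for makespan minimization with `n` offline nodes equals `H_n`. -/
theorem makespan_competitive_ratio (n : ℕ) (hn : 1 ≤ n) :
    (sSup {r : ℝ | ∃ ℓ : Fin n → ℝ, (∀ i, 0 ≤ ℓ i) ∧ Monotone ℓ ∧
        0 < ℓ ⟨n - 1, by omega⟩ ∧
        r = maxEntry (Hvec n ℓ) / maxEntry ℓ} = harmonicNum n) ∧
    (sSup {r : ℝ | ∃ ℓ : Fin n → ℝ, (∀ i, 0 ≤ ℓ i) ∧ Monotone ℓ ∧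
        0 < ℓ ⟨n - 1, by omega⟩ ∧
        r = (∑ i : Fin n, ℓ i / ((n - (i : ℕ) : ℕ) : ℝ)) / ℓ ⟨n - 1, by omega⟩}
      = harmonicNum n) ∧
    (sSup {r : ℝ | ∃ (m : ℕ) (E : ReqSeq n m), 0 < ∑ t, E.q t ∧
        r = maxEntry (wfLoad E) / maxEntry (optLoad E)} = harmonicNum n) :=
  ⟨part1_eq n hn, part2_eq n hn, part3_eq n hn⟩
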